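/- arXiv:2002.11403 — 4 statements merged into one kernel-verified Lean document; each statement's English description precedes it below -/
import Mathlib

section
/- For every r ≥ 4 there exist n ∈ ℕ and an antipodal partial cube S ⊆ (Fin n → Bool) of isometric dimension n such that the rank of S equals r and the minimum degree of S equals 4 (every vertex of S has degree at least 4 and some vertex has degree exactly 4). -/
open scoped Classical

namespace PartialCubesPaper

noncomputable section

/-- Flip coordinate `e` of a vertex of the hypercube. -/
def flipC {n : ℕ} (e : Fin n) (v : Fin n → Bool) : Fin n → Bool :=
  Function.update v e (!(v e))

/-- Coordinatewise negation (the antipode in the hypercube). -/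
def negV {n : ℕ} (v : Fin n → Bool) : Fin n → Bool := fun i => !(v i)

/-- `S` is a partial cube: it is nonempty and any two of its vertices are joined,
inside `S`, by a path of hypercube-edges whose length is the Hamming distance
(equivalently, the induced subgraph of `Q_n` on `S` is connected and its graph
distance coincides with the Hamming distance). -/
def IsPartialCube {n : ℕ} (S : Set (Fin n → Bool)) : Prop :=
  S.Nonempty ∧ ∀ u ∈ S, ∀ v ∈ S, ∃ w : ℕ → (Fin n → Bool),
    w 0 = u ∧ w (hammingDist u v) = v ∧
    (∀ k, k ≤ hammingDist u v → w k ∈ S) ∧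
    (∀ k, k < hammingDist u v → hammingDist (w k) (w (k + 1)) = 1)

/-- Coordinate `e` is non-constant on `T`. -/
def NonConst {n : ℕ} (T : Set (Fin n → Bool)) (e : Fin n) : Prop :=
  ∃ u ∈ T, ∃ v ∈ T, u e ≠ v e

/-- `S ⊆ (Fin n → Bool)` has isometric dimension `n`: no coordinate is constant on `S`. -/
def FullIsoDim {n : ℕ} (S : Set (Fin n → Bool)) : Prop := ∀ e, NonConst S e

/-- `S` is antipodal: full isometric dimension and closed under taking antipodes. -/
def IsAntipodal {n : ℕ} (S : Set (Fin n → Bool)) : Prop :=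
  FullIsoDim S ∧ ∀ v ∈ S, negV v ∈ S

/-- The Θ-class `E_e` crosses `T`. -/
def Crosses {n : ℕ} (e : Fin n) (T : Set (Fin n → Bool)) : Prop :=
  ∃ v ∈ T, flipC e v ∈ T

/-- Degree of `v` in (the subgraph of `Q_n` induced on) `S`. -/
def degree {n : ℕ} (S : Set (Fin n → Bool)) (v : Fin n → Bool) : ℕ :=
  (Finset.univ.filter fun e => flipC e v ∈ S).card

/-- The family of sets `{i | v i = true}`, `v ∈ S`, shatters the finite set `F`. -/
def Shatters {n : ℕ} (S : Set (Fin n → Bool)) (F : Finset (Fin n)) : Prop :=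
  ∀ g : Fin n → Bool, ∃ v ∈ S, ∀ i ∈ F, v i = g i

/-- `S` has rank (VC dimension) `r`. -/
def IsRank {n : ℕ} (S : Set (Fin n → Bool)) (r : ℕ) : Prop :=
  (∃ F : Finset (Fin n), F.card = r ∧ Shatters S F) ∧
  ∀ F : Finset (Fin n), Shatters S F → F.card ≤ r

/-- `T` is convex in `S`. -/
def ConvexIn {n : ℕ} (S T : Set (Fin n → Bool)) : Prop :=
  T ⊆ S ∧ ∀ u ∈ T, ∀ v ∈ T, ∀ w ∈ S,
    hammingDist u w + hammingDist w v = hammingDist u v → w ∈ T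

/-- `T` is gated in `S`. -/
def GatedIn {n : ℕ} (S T : Set (Fin n → Bool)) : Prop :=
  ∀ x ∈ S, ∃ g ∈ T, ∀ u ∈ T, hammingDist x u = hammingDist x g + hammingDist g u

/-- Negate exactly the coordinates that are non-constant on `T`. -/
def negOn {n : ℕ} (T : Set (Fin n → Bool)) (v : Fin n → Bool) : Fin n → Bool :=
  fun i => if NonConst T i then !(v i) else v i

/-- `T` is an antipodal subgraph of `S`: a convex subset closed under
negating the coordinates non-constant on `T`. -/
def IsAntipSub {n : ℕ} (S T : Set (Fin n → Bool)) : Prop :=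
  ConvexIn S T ∧ ∀ v ∈ T, negOn T v ∈ T

/-- A COM: a partial cube all of whose antipodal subgraphs are gated. -/
def IsCOM {n : ℕ} (S : Set (Fin n → Bool)) : Prop :=
  IsPartialCube S ∧ ∀ T, IsAntipSub S T → GatedIn S T

/-- An OM: an antipodal partial cube all of whose antipodal subgraphs are gated. -/
def IsOM {n : ℕ} (S : Set (Fin n → Bool)) : Prop :=
  IsPartialCube S ∧ IsAntipodal S ∧ ∀ T, IsAntipSub S T → GatedIn S T

/-- `T` is a subcube of `S`: convex, and every assignment of values to the
coordinates non-constant on `T` is realized by some vertex of `T`. -/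
def IsSubcube {n : ℕ} (S T : Set (Fin n → Bool)) : Prop :=
  ConvexIn S T ∧ ∀ g : Fin n → Bool, ∃ v ∈ T, ∀ i, NonConst T i → v i = g i

/-- A UOM: an antipodal partial cube all of whose proper antipodal subgraphs are subcubes. -/
def IsUOM {n : ℕ} (S : Set (Fin n → Bool)) : Prop :=
  IsPartialCube S ∧ IsAntipodal S ∧ ∀ T, IsAntipSub S T → T ≠ S → IsSubcube S T

/-- A LOP: a partial cube all of whose antipodal subgraphs are subcubes. -/
def IsLOP {n : ℕ} (S : Set (Fin n → Bool)) : Prop :=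
  IsPartialCube S ∧ ∀ T, IsAntipSub S T → IsSubcube S T

/-- Inclusion-maximal antipodal subgraph. -/
def MaxAntipSub {n : ℕ} (S H : Set (Fin n → Bool)) : Prop :=
  IsAntipSub S H ∧ ∀ H', IsAntipSub S H' → H ⊆ H' → H' = H

/-- Inclusion-maximal proper antipodal subgraph. -/
def MaxProperAntipSub {n : ℕ} (S H : Set (Fin n → Bool)) : Prop :=
  IsAntipSub S H ∧ H ≠ S ∧ ∀ H', IsAntipSub S H' → H' ≠ S → H ⊆ H' → H' = H

/-- For a simplicial vertex `v` of a UOM `S`: `v` with all coordinates `e`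
such that `flip_e v ∈ S` negated. -/
def vstar {n : ℕ} (S : Set (Fin n → Bool)) (v : Fin n → Bool) : Fin n → Bool :=
  fun i => if flipC i v ∈ S then !(v i) else v i

/-- The mutation of `S` at `v`. -/
def mutate {n : ℕ} (S : Set (Fin n → Bool)) (v : Fin n → Bool) : Set (Fin n → Bool) :=
  (S \ {v, negV v}) ∪ {vstar S v, negV (vstar S v)}

/-- One mutation step: `S'` is the mutation of `S` at some simplicial vertex of `S`
(a vertex whose degree equals the rank of `S`). -/
def MutStep {n : ℕ} (S S' : Set (Fin n → Bool)) : Prop :=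
  ∃ r, IsRank S r ∧ ∃ v ∈ S, degree S v = r ∧ S' = mutate S v

/-- `S'` is a reorientation of `S`. -/
def Reorient {n : ℕ} (S S' : Set (Fin n → Bool)) : Prop :=
  ∃ z : Fin n → Bool, S' = (fun x => fun i => xor (x i) (z i)) '' S

/-- `S'` is isomorphic to `S` (as an embedded system: permute coordinates and reorient). -/
def IsomEquiv {n : ℕ} (S S' : Set (Fin n → Bool)) : Prop :=
  ∃ (σ : Equiv.Perm (Fin n)) (z : Fin n → Bool),
    S' = (fun x => fun i => xor (x (σ i)) (z i)) '' S

/-- The coordinates non-constant on `H`. -/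
def nonconstCoords {n : ℕ} (H : Set (Fin n → Bool)) : Finset (Fin n) :=
  Finset.univ.filter fun e => NonConst H e

/-- Image of `H` under deleting the coordinates constant on `H`. -/
def delConst {n : ℕ} (H : Set (Fin n → Bool)) :
    Set (Fin (nonconstCoords H).card → Bool) :=
  (fun v => fun j => v (((nonconstCoords H).orderIsoOfFin rfl j).1)) '' H

/-- `H` is an OM up to constant coordinates. -/
def IsOMConst {n : ℕ} (H : Set (Fin n → Bool)) : Prop := IsOM (delConst H)

/-- Lift: elements of `T` extended by `true` in a new last coordinate, together with
elements of `U` extended by `false`. -/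
def liftSet {n : ℕ} (T U : Set (Fin n → Bool)) : Set (Fin (n + 1) → Bool) :=
  (fun v => Fin.snoc v true) '' T ∪ (fun v => Fin.snoc v false) '' U

/-- `T` is a chunk of `H` (where `H` is an OM up to constant coordinates). -/
def IsChunk {n : ℕ} (H T : Set (Fin n → Bool)) : Prop :=
  IsOMConst H ∧ T ⊆ H ∧
  ((∃ a b, a ≠ b ∧ H = {a, b} ∧ ∃ c, T = {c}) ∨
    (T ∪ negOn H '' T = H ∧
     IsOMConst (liftSet T (negOn H '' T)) ∧
     ∀ A, MaxProperAntipSub H A →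
       A ⊆ T \ negOn H '' T ∨ A ⊆ (negOn H '' T) \ T))

/-- `C` is a corner of the OM (up to constant coordinates) `H`. -/
def IsCornerOfOM {n : ℕ} (H C : Set (Fin n → Bool)) : Prop :=
  (∃ v, H = {v} ∧ C = H) ∨ (∃ T, IsChunk H T ∧ C = H \ T)

/-- `C` is a corner of the partial cube `S`: there is exactly one inclusion-maximal
antipodal subgraph `H` of `S` containing `C`, and `C` is a corner of `H`. -/
def IsCorner {n : ℕ} (S C : Set (Fin n → Bool)) : Prop :=
  C ⊆ S ∧ ∃ H, MaxAntipSub S H ∧ C ⊆ H ∧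
    (∀ H', MaxAntipSub S H' → C ⊆ H' → H' = H) ∧ IsCornerOfOM H C

/-- A corner peeling of `S`. -/
def HasCornerPeeling {n : ℕ} (S : Set (Fin n → Bool)) : Prop :=
  ∃ (k : ℕ) (Cs : Fin k → Set (Fin n → Bool)),
    (∀ i, (Cs i).Nonempty) ∧
    (∀ i j, i ≠ j → Disjoint (Cs i) (Cs j)) ∧
    (⋃ i, Cs i) = S ∧
    ∀ i, IsCorner (S \ ⋃ j, ⋃ (_ : j < i), Cs j) (Cs i)

/-- A cocircuit of the OM `S` of rank `r`: an antipodal subgraph of rank `r - 1`. -/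
def Cocircuit {n : ℕ} (S : Set (Fin n → Bool)) (r : ℕ) (A : Set (Fin n → Bool)) : Prop :=
  IsAntipSub S A ∧ IsRank A (r - 1)

/-- Adjacency in the cocircuit graph of the OM `S` of rank `r`. -/
def CocAdj {n : ℕ} (S : Set (Fin n → Bool)) (r : ℕ) (A B : Set (Fin n → Bool)) : Prop :=
  Cocircuit S r A ∧ Cocircuit S r B ∧ A ≠ B ∧
  IsAntipSub S (A ∩ B) ∧ IsRank (A ∩ B) (r - 2)

/-- The halfspace of `S` along `e` on side `b`. -/
def halfspace {n : ℕ} (S : Set (Fin n → Bool)) (e : Fin n) (b : Bool) :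
    Set (Fin n → Bool) :=
  {v ∈ S | v e = b}

/-- `A 0, …, A m` is a line of the AOM `G` (a halfspace of the rank-`r` OM `S`):
a maximal path in the cocircuit graph of `G` such that consecutive intersections
are antipodal to each other within the middle cocircuit. -/
def IsLine {n : ℕ} (S : Set (Fin n → Bool)) (r : ℕ) (G : Set (Fin n → Bool))
    (m : ℕ) (A : ℕ → Set (Fin n → Bool)) : Prop :=
  1 ≤ m ∧
  (∀ i, i ≤ m → Cocircuit S r (A i) ∧ A i ⊆ G) ∧
  (∀ i, i < m → CocAdj S r (A i) (A (i + 1))) ∧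
  (∀ i j, i ≤ m → j ≤ m → A i = A j → i = j) ∧
  (∀ i, 0 < i → i < m → A (i - 1) ∩ A i = negOn (A i) '' (A i ∩ A (i + 1))) ∧
  (¬ ∃ B, Cocircuit S r B ∧ B ⊆ G ∧ CocAdj S r B (A 0) ∧
      (∀ i, i ≤ m → B ≠ A i) ∧ B ∩ A 0 = negOn (A 0) '' (A 0 ∩ A 1)) ∧
  (¬ ∃ B, Cocircuit S r B ∧ B ⊆ G ∧ CocAdj S r (A m) B ∧
      (∀ i, i ≤ m → B ≠ A i) ∧ A (m - 1) ∩ A m = negOn (A m) '' (A m ∩ B))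

/-- The Θ-class `E_e` crosses the line `A 0, …, A m` at position `i`. -/
def LineCrossAt {n : ℕ} (e : Fin n) (m : ℕ) (A : ℕ → Set (Fin n → Bool)) (i : ℕ) : Prop :=
  i ≤ m ∧ Crosses e (A i) ∧
  ((0 < i ∧ ¬ Crosses e (A (i - 1) ∩ A i)) ∨ (i < m ∧ ¬ Crosses e (A i ∩ A (i + 1))))

def Epos {n : ℕ} (e : Fin n) : Set (Fin n → Bool) := {v | v e = true}
def Eneg {n : ℕ} (e : Fin n) : Set (Fin n → Bool) := {v | v e = false}

/-- Directed edge `A → B` of the orientation of the cocircuit graph of the AOM `G`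
with respect to `E_e`: `A, B` are consecutive on a line crossed by `E_e`, indexed so
that cocircuits before the crossing lie in `E_e^-` and after it in `E_e^+`. -/
def DirEdge {n : ℕ} (S : Set (Fin n → Bool)) (r : ℕ) (G : Set (Fin n → Bool))
    (e : Fin n) (A B : Set (Fin n → Bool)) : Prop :=
  ∃ m P, IsLine S r G m P ∧
    (∃ i, LineCrossAt e m P i ∧ (∀ j, j < i → P j ⊆ Eneg e) ∧
      (∀ j, i < j → j ≤ m → P j ⊆ Epos e)) ∧
    ∃ j, j < m ∧ P j = A ∧ P (j + 1) = B

/-- The orientation of the cocircuit graph of `G` with respect to `E_e` is strictly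
acyclic: every cycle traversing at least one directed edge traverses some directed
edge along its direction and some against it. -/
def StrictlyAcyclic {n : ℕ} (S : Set (Fin n → Bool)) (r : ℕ) (G : Set (Fin n → Bool))
    (e : Fin n) : Prop :=
  ∀ (k : ℕ) (C : ℕ → Set (Fin n → Bool)),
    3 ≤ k →
    (∀ i, i < k → Cocircuit S r (C i) ∧ C i ⊆ G) →
    (∀ i, i < k → CocAdj S r (C i) (C ((i + 1) % k))) →
    (∀ i j, i < k → j < k → C i = C j → i = j) →
    (∃ i, i < k ∧ (DirEdge S r G e (C i) (C ((i + 1) % k)) ∨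
                   DirEdge S r G e (C ((i + 1) % k)) (C i))) →
    (∃ i, i < k ∧ DirEdge S r G e (C i) (C ((i + 1) % k))) ∧
    (∃ i, i < k ∧ DirEdge S r G e (C ((i + 1) % k)) (C i))

/-- The halfspace of the rank-`r` OM `S` along `f` on side `b` is a Euclidean AOM. -/
def IsEuclideanHalf {n : ℕ} (S : Set (Fin n → Bool)) (r : ℕ) (f : Fin n) (b : Bool) : Prop :=
  ∀ e : Fin n, NonConst (halfspace S f b) e → StrictlyAcyclic S r (halfspace S f b) e

/-- `T` defines an expansion of the OM `S` in general position. -/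
def GeneralPosition {n : ℕ} (S : Set (Fin n → Bool)) (T : Set (Fin n → Bool)) : Prop :=
  T ⊆ S ∧ T ∪ negV '' T = S ∧
  IsOM (liftSet T (negV '' T)) ∧
  ∀ A, MaxProperAntipSub S A → A ⊆ T \ negV '' T ∨ A ⊆ (negV '' T) \ T

/-- The OM `S` is Mandel: it has an expansion in general position both of whose
halfspaces along the new coordinate are Euclidean AOMs. -/
def IsMandel {n : ℕ} (S : Set (Fin n → Bool)) : Prop :=
  ∃ T, GeneralPosition S T ∧
    ∀ r', IsRank (liftSet T (negV '' T)) r' →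
      IsEuclideanHalf (liftSet T (negV '' T)) r' (Fin.last n) true ∧
      IsEuclideanHalf (liftSet T (negV '' T)) r' (Fin.last n) false

/-- Adjacency in the cocircuit graph of a non-antipodal COM `S` of rank `r`. -/
def COMCocAdj {n : ℕ} (S : Set (Fin n → Bool)) (r : ℕ) (A B : Set (Fin n → Bool)) : Prop :=
  IsAntipSub S A ∧ IsRank A r ∧ IsAntipSub S B ∧ IsRank B r ∧ A ≠ B ∧
  IsAntipSub S (A ∩ B) ∧ IsRank (A ∩ B) (r - 1)

/-- A COM of rank `r` is pure: all inclusion-maximal antipodal subgraphs have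
rank `r` and the cocircuit graph is connected. -/
def IsPure {n : ℕ} (S : Set (Fin n → Bool)) (r : ℕ) : Prop :=
  (∀ H, MaxAntipSub S H → IsRank H r) ∧
  ∀ A B, IsAntipSub S A → IsRank A r → IsAntipSub S B → IsRank B r →
    Relation.ReflTransGen (COMCocAdj S r) A B

/-- Adjacency in a cycle of length `c` (for `c = 2` this is `K_2`). -/
def cellAdj (c : ℕ) (x y : ZMod c) : Prop := x - y = 1 ∨ y - x = 1

/-- `T` is a cell: a partial cube whose induced graph is isomorphic, as a simple
graph, to a finite Cartesian product of copies of `K_2` and even cycles. -/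
def IsCell {n : ℕ} (T : Set (Fin n → Bool)) : Prop :=
  IsPartialCube T ∧
  ∃ (k : ℕ) (c : Fin k → ℕ),
    (∀ i, c i = 2 ∨ (Even (c i) ∧ 4 ≤ c i)) ∧
    ∃ e : T ≃ ((i : Fin k) → ZMod (c i)),
      ∀ u v : T, hammingDist (u : Fin n → Bool) (v : Fin n → Bool) = 1 ↔
        ∃ j, cellAdj (c j) (e u j) (e v j) ∧ ∀ i, i ≠ j → e u i = e v i

/-- `S` is hypercellular. -/
def IsHypercellular {n : ℕ} (S : Set (Fin n → Bool)) : Prop :=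
  IsPartialCube S ∧
  (∀ T, IsAntipSub S T → IsCell T) ∧
  ∀ k, 2 ≤ k → ∀ X Y Z : Set (Fin n → Bool),
    IsAntipSub S X → IsRank X k → IsAntipSub S Y → IsRank Y k →
    IsAntipSub S Z → IsRank Z k →
    IsAntipSub S (X ∩ Y) → IsRank (X ∩ Y) (k - 1) →
    IsAntipSub S (Y ∩ Z) → IsRank (Y ∩ Z) (k - 1) →
    IsAntipSub S (X ∩ Z) → IsRank (X ∩ Z) (k - 1) →
    IsAntipSub S (X ∩ Y ∩ Z) → IsRank (X ∩ Y ∩ Z) (k - 2) →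
    ∃ W, IsAntipSub S W ∧ X ∪ Y ∪ Z ⊆ W

/-- Delete coordinate `e`. -/
def delCoord {n : ℕ} (e : Fin (n + 1)) (v : Fin (n + 1) → Bool) : Fin n → Bool :=
  fun i => v (e.succAbove i)

/-- `G` is an affine partial cube: the image, under deleting a coordinate, of a
halfspace of an antipodal partial cube. -/
def IsAffine {n : ℕ} (G : Set (Fin n → Bool)) : Prop :=
  ∃ (H : Set (Fin (n + 1) → Bool)) (f : Fin (n + 1)),
    IsPartialCube H ∧ IsAntipodal H ∧ G = delCoord f '' halfspace H f true

/-- The set of antipodes of an affine partial cube `G`. -/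
def antipodes {n : ℕ} (G : Set (Fin n → Bool)) : Set (Fin n → Bool) :=
  {u ∈ G | ∃ w ∈ G, ∀ v ∈ G, hammingDist u v + hammingDist v w = hammingDist u w}


/-! ### Auxiliary construction for Statement 13

For `n ≥ 5` we consider the set `SS n` of all vertices of `Q_n` except those whose
first four coordinates are constant (all `false` or all `true`), with the exception
of the all-`false` and all-`true` vertices themselves, which are kept. -/

section Stmt13Aux

variable {n : ℕ}

/-- The first four coordinates of `v` are all equal to `b`. -/
private def Low (b : Bool) (v : Fin n → Bool) : Prop :=
  ∀ i : Fin n, (i : ℕ) < 4 → v i = b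

/-- The construction for Statement 13. -/
private def SS (n : ℕ) : Set (Fin n → Bool) :=
  {v | (Low false v → v = fun _ => false) ∧ (Low true v → v = fun _ => true)}

private lemma mem_of_not_low {v : Fin n → Bool} (h1 : ¬ Low false v) (h2 : ¬ Low true v) :
    v ∈ SS n := ⟨fun h => absurd h h1, fun h => absurd h h2⟩

private lemma low_of_not_mem {v : Fin n → Bool} (h : v ∉ SS n) :
    Low false v ∨ Low true v := by
  by_contra h'
  push_neg at h'
  exact h (mem_of_not_low h'.1 h'.2)

private lemma flipC_self {v : Fin n → Bool} {e : Fin n} : flipC e v e = !(v e) :=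
  Function.update_self _ _ _

private lemma flipC_ne {v : Fin n → Bool} {e i : Fin n} (h : i ≠ e) : flipC e v i = v i :=
  Function.update_of_ne h _ _

private lemma zz_mem (hn : 5 ≤ n) : (fun _ => false) ∈ SS n := by
  refine ⟨fun _ => rfl, fun h => ?_⟩
  have := h ⟨0, by omega⟩ (by simp)
  simp at this

private lemma hamming_flip_one (v : Fin n → Bool) (e : Fin n) :
    hammingDist v (flipC e v) = 1 := by
  unfold hammingDist
  have : Finset.filter (fun i => v i ≠ flipC e v i) Finset.univ = ({e} : Finset (Fin n)) := by
    ext i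
    simp only [Finset.mem_filter, Finset.mem_univ, true_and, Finset.mem_singleton]
    constructor
    · intro h
      by_contra hie
      exact h (by rw [flipC_ne hie])
    · rintro rfl
      rw [flipC_self]
      cases v i <;> simp
  rw [this, Finset.card_singleton]

private lemma hamming_flip_step {u v : Fin n → Bool} {e : Fin n} (h : u e ≠ v e) {d : ℕ}
    (hd : hammingDist u v = d + 1) : hammingDist (flipC e u) v = d := by
  unfold hammingDist at hd ⊢
  have key : Finset.filter (fun i => flipC e u i ≠ v i) Finset.univ
      = (Finset.filter (fun i => u i ≠ v i) Finset.univ).erase e := by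
    ext i
    simp only [Finset.mem_filter, Finset.mem_univ, true_and, Finset.mem_erase]
    by_cases hie : i = e
    · subst hie
      rw [flipC_self]
      constructor
      · intro hh
        exact absurd (by revert h; cases u i <;> cases v i <;> simp) hh
      · rintro ⟨hh, _⟩
        exact absurd rfl hh
    · rw [flipC_ne hie]
      exact ⟨fun hh => ⟨hie, hh⟩, fun hh => hh.2⟩
  have hmem : e ∈ Finset.filter (fun i => u i ≠ v i) Finset.univ := by
    simp only [Finset.mem_filter, Finset.mem_univ, true_and]
    exact h
  rw [key, Finset.card_erase_of_mem hmem, hd]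
  omega

private lemma badUnique (hn : 5 ≤ n) {c : Fin n → Bool}
    (hA : ¬ Low false c) (hB : ¬ Low true c) {e1 e2 : Fin n} {b1 b2 : Bool}
    (h1 : Low b1 (flipC e1 c)) (h2 : Low b2 (flipC e2 c)) : e1 = e2 := by
  have hlow : ∀ (e : Fin n) (b : Bool), Low b (flipC e c) → (e : ℕ) < 4 := by
    intro e b hb
    by_contra h4
    have hLc : Low b c := by
      intro i hi
      have hie : i ≠ e := Fin.ne_of_val_ne (by omega)
      have := hb i hi
      rwa [flipC_ne hie] at this
    cases b
    · exact hA hLc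
    · exact hB hLc
  have he1 : (e1 : ℕ) < 4 := hlow e1 b1 h1
  have he2 : (e2 : ℕ) < 4 := hlow e2 b2 h2
  by_contra hne
  have hvne : (e1 : ℕ) ≠ (e2 : ℕ) := fun h => hne (Fin.val_injective h)
  obtain ⟨m, hm4, hm1, hm2⟩ : ∃ m : ℕ, m < 4 ∧ m ≠ (e1 : ℕ) ∧ m ≠ (e2 : ℕ) := by
    by_cases h0 : 0 = (e1 : ℕ) ∨ 0 = (e2 : ℕ)
    · by_cases h1' : 1 = (e1 : ℕ) ∨ 1 = (e2 : ℕ)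
      · exact ⟨2, by omega, by omega, by omega⟩
      · exact ⟨1, by omega, by omega, by omega⟩
    · exact ⟨0, by omega, by omega, by omega⟩
  set mi : Fin n := ⟨m, by omega⟩ with hmidef
  have hmval : (mi : ℕ) = m := rfl
  have hmie1 : mi ≠ e1 := Fin.ne_of_val_ne (by rw [hmval]; exact hm1)
  have hmie2 : mi ≠ e2 := Fin.ne_of_val_ne (by rw [hmval]; exact hm2)
  have hb1 : c mi = b1 := by
    have := h1 mi (by rw [hmval]; exact hm4)
    rwa [flipC_ne hmie1] at this
  have hb2 : c mi = b2 := by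
    have := h2 mi (by rw [hmval]; exact hm4)
    rwa [flipC_ne hmie2] at this
  have hbb : b2 = b1 := hb2 ▸ hb1 ▸ rfl
  have hLow : Low b1 c := by
    intro i hi
    by_cases hie1 : i = e1
    · subst hie1
      have := h2 i hi
      rw [flipC_ne hne] at this
      rw [this, hbb]
    · have := h1 i hi
      rwa [flipC_ne hie1] at this
  cases b1
  · exact hA hLow
  · exact hB hLow

private lemma other_low_index (hn : 5 ≤ n) (e : Fin n) :
    ∃ j : Fin n, (j : ℕ) < 2 ∧ j ≠ e := by
  by_cases h0 : (e : ℕ) = 0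
  · exact ⟨⟨1, by omega⟩, by simp, Fin.ne_of_val_ne (by simp [h0])⟩
  · exact ⟨⟨0, by omega⟩, by simp, Fin.ne_of_val_ne (by simp [Ne.symm h0])⟩

private lemma other_high_index (hn : 5 ≤ n) (e : Fin n) :
    ∃ j : Fin n, 2 ≤ (j : ℕ) ∧ (j : ℕ) < 4 ∧ j ≠ e := by
  by_cases h2 : (e : ℕ) = 2
  · exact ⟨⟨3, by omega⟩, by simp, by simp, Fin.ne_of_val_ne (by simp [h2])⟩
  · exact ⟨⟨2, by omega⟩, by simp, by simp, Fin.ne_of_val_ne (by simp [Ne.symm h2])⟩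

private lemma greedy (hn : 5 ≤ n) {c v : Fin n → Bool} (hc : c ∈ SS n) (hv : v ∈ SS n)
    (hne : c ≠ v) : ∃ e, c e ≠ v e ∧ flipC e c ∈ SS n := by
  by_cases hA : Low false c
  · -- c is the all-false vertex
    have hcz : c = fun _ => false := hc.1 hA
    have hvlow : ¬ Low false v := fun h => hne (by rw [hcz, hv.1 h])
    unfold Low at hvlow
    push_neg at hvlow
    obtain ⟨i, hi4, hvi⟩ := hvlow
    have hvi' : v i = true := by revert hvi; cases v i <;> simp
    obtain ⟨j, hj2, hji⟩ := other_low_index hn i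
    refine ⟨i, by rw [hcz, hvi']; simp, mem_of_not_low ?_ ?_⟩
    · intro h
      have := h i hi4
      rw [flipC_self, hcz] at this
      simp at this
    · intro h
      have := h j (by omega)
      rw [flipC_ne hji, hcz] at this
      simp at this
  · by_cases hB : Low true c
    · -- c is the all-true vertex
      have hcz : c = fun _ => true := hc.2 hB
      have hvlow : ¬ Low true v := fun h => hne (by rw [hcz, hv.2 h])
      unfold Low at hvlow
      push_neg at hvlow
      obtain ⟨i, hi4, hvi⟩ := hvlow
      have hvi' : v i = false := by revert hvi; cases v i <;> simp
      obtain ⟨j, hj2, hji⟩ := other_low_index hn i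
      refine ⟨i, by rw [hcz, hvi']; simp, mem_of_not_low ?_ ?_⟩
      · intro h
        have := h j (by omega)
        rw [flipC_ne hji, hcz] at this
        simp at this
      · intro h
        have := h i hi4
        rw [flipC_self, hcz] at this
        simp at this
    · -- c is "mixed"
      by_contra hgood
      push_neg at hgood
      obtain ⟨e1, he1⟩ : ∃ e, c e ≠ v e := by
        by_contra h
        push_neg at h
        exact hne (funext h)
      by_cases hu : ∃ e2, e2 ≠ e1 ∧ c e2 ≠ v e2
      · obtain ⟨e2, he21, he2⟩ := hu
        rcases low_of_not_mem (hgood e1 he1) with h1 | h1 <;>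
          rcases low_of_not_mem (hgood e2 he2) with h2 | h2 <;>
          exact he21 (badUnique hn hA hB h2 h1)
      · push_neg at hu
        have hfv : flipC e1 c = v := by
          funext i
          by_cases hie : i = e1
          · subst hie
            rw [flipC_self]
            revert he1
            cases c i <;> cases v i <;> simp
          · rw [flipC_ne hie]
            exact hu i hie
        exact hgood e1 he1 (hfv ▸ hv)

private lemma pathEx (hn : 5 ≤ n) :
    ∀ (d : ℕ) (u : Fin n → Bool), u ∈ SS n → ∀ v ∈ SS n, hammingDist u v = d →
      ∃ w : ℕ → (Fin n → Bool), w 0 = u ∧ w d = v ∧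
        (∀ k, k ≤ d → w k ∈ SS n) ∧ (∀ k, k < d → hammingDist (w k) (w (k + 1)) = 1) := by
  intro d
  induction d with
  | zero =>
    intro u hu v hv hd
    have huv : u = v := by rwa [hammingDist_eq_zero] at hd
    subst huv
    exact ⟨fun _ => u, rfl, rfl, fun k _ => hu, fun k hk => absurd hk (Nat.not_lt_zero k)⟩
  | succ d ih =>
    intro u hu v hv hd
    have hne : u ≠ v := by
      intro h
      rw [h, hammingDist_self] at hd
      omega
    obtain ⟨e, he, hmem⟩ := greedy hn hu hv hne
    have hd' : hammingDist (flipC e u) v = d := hamming_flip_step he hd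
    obtain ⟨w', hw0, hwd, hwS, hwdist⟩ := ih (flipC e u) hmem v hv hd'
    refine ⟨fun k => Nat.casesOn k u (fun k' => w' k'), rfl, hwd, ?_, ?_⟩
    · intro k hk
      cases k with
      | zero => exact hu
      | succ k => exact hwS k (by omega)
    · intro k hk
      cases k with
      | zero =>
        show hammingDist u (w' 0) = 1
        rw [hw0]
        exact hamming_flip_one u e
      | succ k => exact hwdist k (by omega)

private lemma card_low (hn : 5 ≤ n) :
    ({e : Fin n | (e : ℕ) < 4} : Finset (Fin n)).card = 4 := by
  have key : ({e : Fin n | (e : ℕ) < 4} : Finset (Fin n))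
      = (Finset.univ : Finset (Fin 4)).map
          ⟨Fin.castLE (by omega), Fin.castLE_injective _⟩ := by
    ext e
    simp only [Finset.mem_filter, Finset.mem_univ, true_and, Finset.mem_map,
      Function.Embedding.coeFn_mk]
    constructor
    · intro h
      exact ⟨⟨(e : ℕ), h⟩, Fin.ext rfl⟩
    · rintro ⟨a, rfl⟩
      exact a.isLt
  rw [key, Finset.card_map, Finset.card_univ, Fintype.card_fin]

private lemma flip_const_mem (hn : 5 ≤ n) (b : Bool) (e : Fin n) :
    (flipC e (fun _ => b) ∈ SS n) ↔ (e : ℕ) < 4 := by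
  constructor
  · intro hmem
    by_contra h4
    have hlow : Low b (flipC e (fun _ => b)) := by
      intro i hi
      rw [flipC_ne (Fin.ne_of_val_ne (by omega))]
    cases b
    · have := congrFun (hmem.1 hlow) e
      rw [flipC_self] at this
      simp at this
    · have := congrFun (hmem.2 hlow) e
      rw [flipC_self] at this
      simp at this
  · intro h4
    obtain ⟨j, hj2, hje⟩ := other_low_index hn e
    cases b
    · refine mem_of_not_low (fun h => ?_) (fun h => ?_)
      · have := h e h4
        rw [flipC_self] at this
        simp at this
      · have := h j (by omega)
        rw [flipC_ne hje] at this
        simp at this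
    · refine mem_of_not_low (fun h => ?_) (fun h => ?_)
      · have := h j (by omega)
        rw [flipC_ne hje] at this
        simp at this
      · have := h e h4
        rw [flipC_self] at this
        simp at this

private lemma deg_const (hn : 5 ≤ n) (b : Bool) : degree (SS n) (fun _ => b) = 4 := by
  unfold degree
  have : (Finset.univ.filter fun e : Fin n => flipC e (fun _ => b) ∈ SS n)
      = ({e : Fin n | (e : ℕ) < 4} : Finset (Fin n)) := by
    apply Finset.filter_congr
    intro e _
    exact iff_of_eq (propext (flip_const_mem hn b e))
  rw [this, card_low hn]

private lemma deg_ge (hn : 5 ≤ n) {v : Fin n → Bool} (hv : v ∈ SS n) :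
    4 ≤ degree (SS n) v := by
  by_cases hvz : v = fun _ => false
  · subst hvz
    rw [deg_const hn false]
  · by_cases hvo : v = fun _ => true
    · subst hvo
      rw [deg_const hn true]
    · have hA : ¬ Low false v := fun h => hvz (hv.1 h)
      have hB : ¬ Low true v := fun h => hvo (hv.2 h)
      have hsum := Finset.card_filter_add_card_filter_not
        (s := (Finset.univ : Finset (Fin n))) (p := fun e : Fin n => flipC e v ∈ SS n)
      have hbad : (Finset.univ.filter fun e : Fin n => ¬ (flipC e v ∈ SS n)).card ≤ 1 := by
        apply Finset.card_le_one.mpr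
        intro a ha b hb
        rw [Finset.mem_filter] at ha hb
        rcases low_of_not_mem ha.2 with h1 | h1 <;>
          rcases low_of_not_mem hb.2 with h2 | h2 <;>
          exact badUnique hn hA hB h1 h2
      have hcard : (Finset.univ : Finset (Fin n)).card = n := by
        rw [Finset.card_univ, Fintype.card_fin]
      unfold degree
      omega

end Stmt13Aux

/-- for every `r ≥ 4` there is an antipodal partial cube of rank `r`
and minimum degree 4. -/
theorem stmt13 (r : ℕ) (hr : 4 ≤ r) :
    ∃ (n : ℕ) (S : Set (Fin n → Bool)),
      IsPartialCube S ∧ IsAntipodal S ∧ IsRank S r ∧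
      (∀ v ∈ S, 4 ≤ degree S v) ∧ ∃ v ∈ S, degree S v = 4 := by
  have hn : 5 ≤ r + 1 := by omega
  refine ⟨r + 1, SS (r + 1), ⟨⟨fun _ => false, zz_mem hn⟩,
    fun u hu v hv => pathEx hn (hammingDist u v) u hu v hv rfl⟩, ⟨?_, ?_⟩, ⟨?_, ?_⟩,
    fun v hv => deg_ge hn hv, ⟨fun _ => false, zz_mem hn, deg_const hn false⟩⟩
  · -- FullIsoDim
    intro e
    set u : Fin (r + 1) → Bool := fun i => decide ((i : ℕ) < 2) with hudef
    have huS : u ∈ SS (r + 1) := by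
      refine mem_of_not_low (fun h => ?_) (fun h => ?_)
      · have := h ⟨0, by omega⟩ (by simp)
        simp [hudef] at this
      · have := h ⟨2, by omega⟩ (by simp)
        simp [hudef] at this
    have hflipS : flipC e u ∈ SS (r + 1) := by
      obtain ⟨j, hj2, hje⟩ := other_low_index hn e
      obtain ⟨j', hj'2, hj'4, hj'e⟩ := other_high_index hn e
      refine mem_of_not_low (fun h => ?_) (fun h => ?_)
      · have := h j (by omega)
        rw [flipC_ne hje] at this
        simp [hudef, hj2] at this
        omega
      · have := h j' hj'4
        rw [flipC_ne hj'e] at this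
        simp [hudef] at this
        omega
    exact ⟨u, huS, flipC e u, hflipS, by rw [flipC_self]; cases u e <;> simp⟩
  · -- closed under antipodes
    intro v hv
    refine ⟨fun h => ?_, fun h => ?_⟩
    · have hLt : Low true v := by
        intro i hi
        have := h i hi
        simpa [negV] using this
      have := hv.2 hLt
      funext i
      simp [negV, congrFun this i]
    · have hLf : Low false v := by
        intro i hi
        have := h i hi
        simpa [negV] using this
      have := hv.1 hLf
      funext i
      simp [negV, congrFun this i]
  · -- exists shattered set of size r
    refine ⟨(Finset.univ : Finset (Fin (r + 1))).erase ⟨0, by omega⟩, ?_, ?_⟩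
    · rw [Finset.card_erase_of_mem (Finset.mem_univ _), Finset.card_univ, Fintype.card_fin]
      omega
    · intro g
      set i0 : Fin (r + 1) := ⟨0, by omega⟩ with hi0def
      set i1 : Fin (r + 1) := ⟨1, by omega⟩ with hi1def
      have hi10 : i1 ≠ i0 := Fin.ne_of_val_ne (by simp [hi0def, hi1def])
      set v : Fin (r + 1) → Bool := Function.update g i0 (!(g i1)) with hvdef
      have hv0 : v i0 = !(g i1) := Function.update_self _ _ _
      have hv1 : v i1 = g i1 := Function.update_of_ne hi10 _ _
      have hvS : v ∈ SS (r + 1) := by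
        cases hg1 : g i1
        · refine mem_of_not_low (fun h => ?_) (fun h => ?_)
          · have := h i0 (by simp [hi0def])
            rw [hv0, hg1] at this
            simp at this
          · have := h i1 (by simp [hi1def])
            rw [hv1, hg1] at this
            simp at this
        · refine mem_of_not_low (fun h => ?_) (fun h => ?_)
          · have := h i1 (by simp [hi1def])
            rw [hv1, hg1] at this
            simp at this
          · have := h i0 (by simp [hi0def])
            rw [hv0, hg1] at this
            simp at this
      refine ⟨v, hvS, fun i hi => ?_⟩
      rw [Finset.mem_erase] at hi
      exact Function.update_of_ne hi.1 _ _
  · -- rank upper bound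
    intro F hF
    by_contra hcard
    push_neg at hcard
    have hle : F.card ≤ r + 1 := by
      have := Finset.card_le_card (Finset.subset_univ F)
      rwa [Finset.card_univ, Fintype.card_fin] at this
    have hFu : F = Finset.univ := Finset.eq_univ_of_card F (by
      rw [Fintype.card_fin]; omega)
    set i4 : Fin (r + 1) := ⟨4, by omega⟩ with hi4def
    set g : Fin (r + 1) → Bool := Function.update (fun _ => false) i4 true with hgdef
    obtain ⟨v, hvS, hvg⟩ := hF g
    have hveq : v = g := funext fun i => hvg i (by rw [hFu]; exact Finset.mem_univ i)
    subst hveq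
    have hgl : Low false g := by
      intro i hi
      have hii4 : i ≠ i4 := Fin.ne_of_val_ne (by simp [hi4def]; omega)
      exact Function.update_of_ne hii4 _ _
    have := congrFun (hvS.1 hgl) i4
    rw [hgdef] at this
    simp at this

end

end PartialCubesPaper
end

section
/- There exist n ∈ ℕ and an antipodal partial cube S ⊆ (Fin n → Bool) of isometric dimension n such that the rank of S equals 4 and the minimum degree of S equals 3 (every vertex of S has degree at least 3 and some vertex has degree exactly 3). -/
open scoped Classical

namespace PartialCubesPaper

noncomputable section

/-- The explicit example: 22 vertices of `Q_5`. -/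
def exL : List (Fin 5 → Bool) :=
[![false,false,false,false,false],
![true,false,false,false,false],
![false,true,false,false,false],
![true,true,false,false,false],
![false,false,true,false,false],
![true,false,true,false,false],
![false,true,true,false,false],
![false,false,false,true,false],
![true,false,false,true,false],
![false,true,false,true,false],
![false,false,true,true,false],
![true,true,false,false,true],
![true,false,true,false,true],
![false,true,true,false,true],
![true,true,true,false,true],
![true,false,false,true,true],
![false,true,false,true,true],
![true,true,false,true,true],
![false,false,true,true,true],
![true,false,true,true,true],
![false,true,true,true,true],
![true,true,true,true,true]]

def exS : Set (Fin 5 → Bool) := {v | v ∈ exL}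

instance decMemExS : DecidablePred (· ∈ exS) := fun v =>
  decidable_of_iff (v ∈ exL) Iff.rfl

lemma path_of_step {n : ℕ} (S : Set (Fin n → Bool))
    (step : ∀ u ∈ S, ∀ v ∈ S, u ≠ v →
      ∃ u' ∈ S, hammingDist u u' = 1 ∧ hammingDist u' v + 1 = hammingDist u v) :
    ∀ d u, u ∈ S → ∀ v, v ∈ S → hammingDist u v = d →
      ∃ w : ℕ → (Fin n → Bool),
        w 0 = u ∧ w (hammingDist u v) = v ∧
        (∀ k, k ≤ hammingDist u v → w k ∈ S) ∧
        (∀ k, k < hammingDist u v → hammingDist (w k) (w (k + 1)) = 1) := by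
  intro d
  induction d with
  | zero =>
    intro u hu v hv hd
    have huv : u = v := by rwa [hammingDist_eq_zero] at hd
    subst huv
    refine ⟨fun _ => u, rfl, by simp [hammingDist_self], ?_, ?_⟩
    · intro k hk
      simp [hammingDist_self] at hk
      simpa [hk]
    · intro k hk; simp [hammingDist_self] at hk
  | succ d ih =>
    intro u hu v hv hd
    have hne : u ≠ v := by
      intro h; subst h; simp [hammingDist_self] at hd
    obtain ⟨u', hu', h1, h2⟩ := step u hu v hv hne
    have hd' : hammingDist u' v = d := by omega
    obtain ⟨w', hw0, hwend, hmem, hstep⟩ := ih u' hu' v hv hd'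
    rw [hd'] at hwend hmem hstep
    refine ⟨fun k => if k = 0 then u else w' (k - 1), by simp, ?_, ?_, ?_⟩
    · rw [hd]; simpa using hwend
    · intro k hk
      rw [hd] at hk
      by_cases h0 : k = 0
      · simpa [h0]
      · simp only [h0, if_neg]
        exact hmem (k - 1) (by omega)
    · intro k hk
      rw [hd] at hk
      by_cases h0 : k = 0
      · subst h0
        simpa [hw0] using h1
      · have : k - 1 + 1 = k := by omega
        simp only [h0, if_neg, Nat.succ_ne_zero]
        rw [show k + 1 - 1 = (k - 1) + 1 by omega]
        exact hstep (k - 1) (by omega)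

lemma exS_step : ∀ u ∈ exS, ∀ v ∈ exS, u ≠ v →
    ∃ u' ∈ exS, hammingDist u u' = 1 ∧ hammingDist u' v + 1 = hammingDist u v := by
  decide

lemma exS_partialCube : IsPartialCube exS := by
  constructor
  · exact ⟨![false,false,false,false,false], by decide⟩
  · intro u hu v hv
    exact path_of_step exS exS_step (hammingDist u v) u hu v hv rfl

lemma exS_antipodal : IsAntipodal exS := by
  constructor
  · intro e
    show ∃ u ∈ exS, ∃ v ∈ exS, u e ≠ v e
    revert e; decide
  · show ∀ v ∈ exS, negV v ∈ exS
    decide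

lemma exS_rank : IsRank exS 4 := by
  constructor
  · refine ⟨{0, 1, 2, 3}, by decide, ?_⟩
    show ∀ g : Fin 5 → Bool, ∃ v ∈ exS, ∀ i ∈ ({0, 1, 2, 3} : Finset (Fin 5)), v i = g i
    decide
  · intro F hF
    by_contra hlt
    push_neg at hlt
    have h5 : 5 ≤ F.card := hlt
    have hFu : F = Finset.univ := by
      apply Finset.eq_univ_of_card
      have := F.card_le_univ
      rw [Fintype.card_fin] at this ⊢
      omega
    subst hFu
    have hns : ¬ ∀ g : Fin 5 → Bool,
        ∃ v ∈ exS, ∀ i ∈ (Finset.univ : Finset (Fin 5)), v i = g i := by decide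
    exact hns hF

lemma exS_degree (v : Fin 5 → Bool) :
    degree exS v = (Finset.univ.filter fun e => flipC e v ∈ exS).card := by
  unfold degree
  exact congrArg Finset.card
    (Finset.filter_congr_decidable Finset.univ (fun e => flipC e v ∈ exS) _)

/-- there is an antipodal partial cube of rank 4 and minimum degree 3. -/
theorem stmt14 :
    ∃ (n : ℕ) (S : Set (Fin n → Bool)),
      IsPartialCube S ∧ IsAntipodal S ∧ IsRank S 4 ∧
      (∀ v ∈ S, 3 ≤ degree S v) ∧ ∃ v ∈ S, degree S v = 3 := by
  refine ⟨5, exS, exS_partialCube, exS_antipodal, exS_rank, ?_, ?_⟩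
  · intro v hv
    rw [exS_degree]
    revert hv
    show v ∈ exS → _
    revert v; decide
  · refine ⟨![true,true,false,false,false], by decide, ?_⟩
    rw [exS_degree]
    decide

end

end PartialCubesPaper
end

section
/- Let S ⊆ (Fin n → Bool) be an antipodal partial cube of isometric dimension n and rank r, and let e be a coordinate. Then the halfspace E_e^+ = {v ∈ S : v e = true} (an affine partial cube) has rank at most r − 1, where the rank of E_e^+ is the VC dimension of the corresponding set family on Fin n. -/
open scoped Classical

namespace PartialCubesPaper

noncomputable section

/-- a halfspace of an antipodal partial cube of rank `r` has rank
at most `r - 1`. -/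
theorem stmt15 {n r : ℕ} (S : Set (Fin n → Bool))
    (hpc : IsPartialCube S) (hant : IsAntipodal S) (hr : IsRank S r) (e : Fin n) :
    ∀ r', IsRank (halfspace S e true) r' → r' < r := by
  intro r' hr'
  obtain ⟨⟨F, hFcard, hFsh⟩, _⟩ := hr'
  -- e ∉ F
  have heF : e ∉ F := by
    intro heF
    obtain ⟨v, hv, hvg⟩ := hFsh (fun _ => false)
    have := hvg e heF
    rw [hv.2] at this
    simp at this
  -- S shatters insert e F
  have hSsh : Shatters S (insert e F) := by
    intro g
    by_cases hge : g e = true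
    · obtain ⟨v, hv, hvg⟩ := hFsh g
      refine ⟨v, hv.1, ?_⟩
      intro i hi
      rcases Finset.mem_insert.mp hi with h | h
      · rw [h, hv.2, hge]
      · exact hvg i h
    · obtain ⟨v, hv, hvg⟩ := hFsh (fun i => !(g i))
      refine ⟨negV v, hant.2 v hv.1, ?_⟩
      intro i hi
      rcases Finset.mem_insert.mp hi with h | h
      · have hgf : g e = false := Bool.eq_false_iff.mpr hge
        rw [h]
        simp [negV, hv.2, hgf]
      · have := hvg i h
        simp [negV, this]
  have hle := hr.2 (insert e F) hSsh
  rw [Finset.card_insert_of_notMem heF, hFcard] at hle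
  omega

end

end PartialCubesPaper
end

section
/- Let G ⊆ (Fin n → Bool) be an affine partial cube and let e be a coordinate non-constant on G. Then A(π_e(G)) = π_e(A(G)): the set of antipodes of the contraction π_e(G) equals the image under π_e of the set of antipodes of G. -/
open scoped Classical

namespace PartialCubesPaper

noncomputable section

section AuxLemmas

lemma hamming_between {m : ℕ} (u v w : Fin m → Bool) :
    hammingDist u v + hammingDist v w = hammingDist u w ↔
      ∀ i, u i = w i → v i = u i := by
  classical
  set A := Finset.univ.filter (fun i => u i ≠ v i) with hA
  set B := Finset.univ.filter (fun i => v i ≠ w i) with hB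
  set C := Finset.univ.filter (fun i => u i ≠ w i) with hC
  have hdA : hammingDist u v = A.card := rfl
  have hdB : hammingDist v w = B.card := rfl
  have hdC : hammingDist u w = C.card := rfl
  have hCeq : C = (A ∪ B) \ (A ∩ B) := by
    ext i
    simp only [hA, hB, hC, Finset.mem_sdiff, Finset.mem_union, Finset.mem_inter,
      Finset.mem_filter, Finset.mem_univ, true_and]
    cases hu : u i <;> cases hv : v i <;> cases hw : w i <;> simp
  have hsub : A ∩ B ⊆ A ∪ B := (Finset.inter_subset_left).trans Finset.subset_union_left
  have hcard : C.card + (A ∩ B).card = (A ∪ B).card := by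
    rw [hCeq]; exact Finset.card_sdiff_add_card_eq_card hsub
  have hcard2 : (A ∪ B).card + (A ∩ B).card = A.card + B.card :=
    Finset.card_union_add_card_inter A B
  rw [hdA, hdB, hdC]
  constructor
  · intro h i hi
    by_contra hvi
    have hABcard : (A ∩ B).card = 0 := by omega
    have : i ∈ A ∩ B := by
      simp only [hA, hB, Finset.mem_inter, Finset.mem_filter, Finset.mem_univ, true_and]
      constructor
      · exact fun hh => hvi hh.symm
      · intro hh; exact hvi (by rw [hh, ← hi])
    rw [Finset.card_eq_zero] at hABcard
    simp [hABcard] at this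
  · intro h
    have : A ∩ B = ∅ := by
      rw [Finset.eq_empty_iff_forall_notMem]
      intro i hi
      simp only [hA, hB, Finset.mem_inter, Finset.mem_filter, Finset.mem_univ, true_and] at hi
      obtain ⟨h1, h2⟩ := hi
      have : u i = w i := by
        cases hu : u i <;> cases hv : v i <;> cases hw : w i <;> simp_all
      exact h1 ((h i this).symm)
    rw [this] at hcard hcard2
    simp at hcard hcard2
    omega

lemma notNonConst {m : ℕ} {T : Set (Fin m → Bool)} {i : Fin m} (h : ¬ NonConst T i) :
    ∀ a ∈ T, ∀ b ∈ T, a i = b i := by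
  intro a ha b hb
  by_contra hne
  exact h ⟨a, ha, b, hb, hne⟩

lemma antipodes_char {m : ℕ} (T : Set (Fin m → Bool)) (u : Fin m → Bool) :
    u ∈ antipodes T ↔ u ∈ T ∧ negOn T u ∈ T := by
  constructor
  · rintro ⟨hu, w, hw, hbtw⟩
    refine ⟨hu, ?_⟩
    have : negOn T u = w := by
      funext i
      by_cases hnc : NonConst T i
      · obtain ⟨a, ha, b, hb, hab⟩ := id hnc
        have hv : ∃ v ∈ T, v i ≠ u i := by
          by_cases h1 : a i = u i
          · exact ⟨b, hb, fun hh => hab (h1.trans hh.symm)⟩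
          · exact ⟨a, ha, h1⟩
        obtain ⟨v, hv, hvi⟩ := hv
        have := (hamming_between u v w).mp (hbtw v hv) i
        have hw' : u i ≠ w i := fun huw => hvi (this huw)
        simp only [negOn, if_pos hnc]
        cases hu' : u i <;> cases hw'' : w i <;> simp_all
      · simp only [negOn, if_neg hnc]
        exact notNonConst hnc u hu w hw
    rw [this]; exact hw
  · rintro ⟨hu, hneg⟩
    refine ⟨hu, negOn T u, hneg, fun v hv => ?_⟩
    rw [hamming_between]
    intro i hi
    have hnc : ¬ NonConst T i := by
      intro hnc
      simp only [negOn, if_pos hnc] at hi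
      cases h : u i <;> simp [h] at hi
    exact notNonConst hnc v hv u hu

lemma geo_between {m : ℕ} (u x : Fin m → Bool) (w : ℕ → Fin m → Bool)
    (h0 : w 0 = u) (hd : w (hammingDist u x) = x)
    (hstep : ∀ k, k < hammingDist u x → hammingDist (w k) (w (k+1)) = 1)
    (k : ℕ) (hk : k ≤ hammingDist u x) :
    hammingDist u (w k) + hammingDist (w k) x = hammingDist u x := by
  set d := hammingDist u x with hdd
  have claim1 : ∀ j, j ≤ d → hammingDist u (w j) ≤ j := by
    intro j
    induction j with
    | zero => intro _; simp [h0]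
    | succ j ih =>
      intro hj
      have h1 := ih (Nat.le_of_succ_le hj)
      have h2 := hstep j (Nat.lt_of_succ_le hj)
      calc hammingDist u (w (j+1)) ≤ hammingDist u (w j) + hammingDist (w j) (w (j+1)) :=
            hammingDist_triangle _ _ _
        _ ≤ j + 1 := by omega
  have claim2 : ∀ j, ∀ i, i + j ≤ d → hammingDist (w i) (w (i + j)) ≤ j := by
    intro j
    induction j with
    | zero => intro i _; simp
    | succ j ih =>
      intro i hij
      have h1 := hstep i (by omega)
      have h2 := ih (i+1) (by omega)
      calc hammingDist (w i) (w (i + (j+1)))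
          ≤ hammingDist (w i) (w (i+1)) + hammingDist (w (i+1)) (w (i+1+j)) := by
            have : i + (j + 1) = i + 1 + j := by omega
            rw [this]; exact hammingDist_triangle _ _ _
        _ ≤ 1 + j := by omega
        _ = j + 1 := by omega
  have h1 := claim1 k hk
  have h2 := claim2 (d - k) k (by omega)
  rw [(by omega : k + (d - k) = d), hd] at h2
  have h3 := hammingDist_triangle u (w k) x
  omega

lemma eq_flip_of_dist_one {m : ℕ} {u v : Fin m → Bool} (h : hammingDist u v = 1) :
    ∃ j, u j ≠ v j ∧ v = flipC j u := by
  rw [hammingDist, Finset.card_eq_one] at h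
  obtain ⟨j, hj⟩ := h
  have hmem : ∀ i, u i ≠ v i ↔ i = j := by
    intro i
    rw [← Finset.mem_singleton, ← hj]
    simp
  refine ⟨j, (hmem j).mpr rfl, ?_⟩
  funext i
  by_cases hij : i = j
  · subst hij
    have := (hmem i).mpr rfl
    simp only [flipC, Function.update_self]
    cases h1 : u i <;> cases h2 : v i <;> simp_all
  · have : u i = v i := by
      by_contra hne
      exact hij ((hmem i).mp hne)
    simp [flipC, Function.update_of_ne hij, ← this]

lemma flip_insert_self {m : ℕ} (f : Fin (m+1)) (b : Bool) (u : Fin m → Bool) :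
    flipC f (Fin.insertNth f b u) = Fin.insertNth f (!b) u := by
  funext i
  by_cases hif : i = f
  · subst hif
    simp [flipC, Fin.insertNth_apply_same]
  · obtain ⟨j, rfl⟩ := Fin.exists_succAbove_eq hif
    simp [flipC, Function.update_of_ne (Fin.succAbove_ne f j), Fin.insertNth_apply_succAbove]

lemma flip_insert_succAbove {m : ℕ} (f : Fin (m+1)) (j : Fin m) (b : Bool) (u : Fin m → Bool) :
    flipC (f.succAbove j) (Fin.insertNth f b u) = Fin.insertNth f b (flipC j u) := by
  funext i
  by_cases hif : i = f
  · subst hif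
    simp [flipC, Function.update_of_ne (Ne.symm (Fin.succAbove_ne i j)),
      Fin.insertNth_apply_same]
  · obtain ⟨k, rfl⟩ := Fin.exists_succAbove_eq hif
    by_cases hkj : k = j
    · subst hkj
      simp [flipC, Fin.insertNth_apply_succAbove]
    · have : f.succAbove k ≠ f.succAbove j := fun h => hkj (Fin.succAbove_right_injective h)
      simp [flipC, Function.update_of_ne this, Function.update_of_ne hkj,
        Fin.insertNth_apply_succAbove]

lemma del_insert {m : ℕ} (f : Fin (m+1)) (b : Bool) (u : Fin m → Bool) :
    delCoord f (Fin.insertNth f b u) = u := by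
  funext i; simp [delCoord, Fin.insertNth_apply_succAbove]

lemma insert_del {m : ℕ} (f : Fin (m+1)) (v : Fin (m+1) → Bool) :
    Fin.insertNth f (v f) (delCoord f v) = v := by
  funext i
  by_cases hif : i = f
  · subst hif; simp [Fin.insertNth_apply_same]
  · obtain ⟨j, rfl⟩ := Fin.exists_succAbove_eq hif
    simp [delCoord, Fin.insertNth_apply_succAbove]

lemma negV_insert {m : ℕ} (f : Fin (m+1)) (b : Bool) (u : Fin m → Bool) :
    negV (Fin.insertNth f b u) = Fin.insertNth f (!b) (negV u) := by
  funext i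
  by_cases hif : i = f
  · subst hif; simp [negV, Fin.insertNth_apply_same]
  · obtain ⟨j, rfl⟩ := Fin.exists_succAbove_eq hif
    simp [negV, Fin.insertNth_apply_succAbove]

lemma mem_G_iff {m : ℕ} {H : Set (Fin (m+1) → Bool)} {f : Fin (m+1)}
    {G : Set (Fin m → Bool)} (hG : G = delCoord f '' halfspace H f true)
    (u : Fin m → Bool) : u ∈ G ↔ Fin.insertNth f true u ∈ H := by
  subst hG
  constructor
  · rintro ⟨v, ⟨hvH, hvf⟩, rfl⟩
    have := insert_del f v
    rw [hvf] at this
    rw [this]; exact hvH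
  · intro h
    exact ⟨Fin.insertNth f true u, ⟨h, Fin.insertNth_apply_same ..⟩, del_insert ..⟩

lemma nonconst_del {m : ℕ} (T : Set (Fin (m+1) → Bool)) (e : Fin (m+1)) (i : Fin m) :
    NonConst (delCoord e '' T) i ↔ NonConst T (e.succAbove i) := by
  constructor
  · rintro ⟨u, ⟨a, ha, rfl⟩, v, ⟨b, hb, rfl⟩, huv⟩
    exact ⟨a, ha, b, hb, huv⟩
  · rintro ⟨a, ha, b, hb, hab⟩
    exact ⟨delCoord e a, ⟨a, ha, rfl⟩, delCoord e b, ⟨b, hb, rfl⟩, hab⟩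

lemma negOn_del {m : ℕ} (T : Set (Fin (m+1) → Bool)) (e : Fin (m+1))
    (u : Fin (m+1) → Bool) :
    delCoord e (negOn T u) = negOn (delCoord e '' T) (delCoord e u) := by
  funext i
  simp only [delCoord, negOn, nonconst_del]

lemma no_bad {n : ℕ} (G : Set (Fin (n + 1) → Bool)) (haff : IsAffine G)
    (e : Fin (n + 1)) (he : NonConst G e)
    (u : Fin (n + 1) → Bool) (hu : u ∈ G)
    (hwG : flipC e (negOn G u) ∈ G)
    (h1 : flipC e u ∉ G) (h2 : negOn G u ∉ G) : False := by
  obtain ⟨H, f, ⟨hHne, hHgeo⟩, ⟨hHdim, hHneg⟩, hG⟩ := haff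
  set w := flipC e (negOn G u) with hwdef
  have hwj : ∀ j, j ≠ e → w j = negOn G u j := by
    intro j hj
    simp [hwdef, flipC, Function.update_of_ne hj]
  have huH : Fin.insertNth f true u ∈ H := (mem_G_iff hG u).mp hu
  have hwH : Fin.insertNth f true w ∈ H := (mem_G_iff hG w).mp hwG
  set x := negV (Fin.insertNth f true w) with hxdef
  have hxH : x ∈ H := hHneg _ hwH
  have hne : Fin.insertNth f true u ≠ x := by
    intro hh
    have := congrFun hh f
    rw [hxdef, negV_insert] at this
    simp [Fin.insertNth_apply_same] at this
  obtain ⟨p, hp0, hpd, hpmem, hpstep⟩ := hHgeo _ huH x hxH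
  have hdpos : 1 ≤ hammingDist (Fin.insertNth f true u) x := hammingDist_pos.mpr hne
  have hstep1 : hammingDist (Fin.insertNth f true u) (p 1) = 1 := by
    have := hpstep 0 (by omega)
    rwa [hp0] at this
  obtain ⟨j, hjne, hjflip⟩ := eq_flip_of_dist_one hstep1
  have hp1H : p 1 ∈ H := hpmem 1 hdpos
  have hbtw := (hamming_between (Fin.insertNth f true u) (p 1) x).mp
    (geo_between _ _ p hp0 hpd hpstep 1 hdpos)
  have ha : Fin.insertNth f false u ∈ H := by
    by_cases hjf : j = f
    · subst hjf
      rw [hjflip, flip_insert_self] at hp1H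
      simpa using hp1H
    · exfalso
      obtain ⟨j', rfl⟩ := Fin.exists_succAbove_eq hjf
      rw [hjflip, flip_insert_succAbove] at hp1H
      have hflipG : flipC j' u ∈ G := (mem_G_iff hG _).mpr hp1H
      have hval : u j' = w j' := by
        have hbtwj := hbtw (f.succAbove j')
        simp only [Fin.insertNth_apply_succAbove] at hbtwj hjne
        have hjne2 : u j' ≠ x (f.succAbove j') := fun hh => hjne (hbtwj hh).symm
        have hx : x (f.succAbove j') = !(w j') := by
          rw [hxdef, negV_insert]
          simp [Fin.insertNth_apply_succAbove, negV]
        rw [hx] at hjne2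
        cases h : u j' <;> cases h' : w j' <;> simp_all
      by_cases hje : j' = e
      · subst hje
        exact h1 hflipG
      · have hwj' := hwj j' hje
        have hnc : ¬ NonConst G j' := by
          intro hnc
          rw [hwj'] at hval
          simp [negOn, hnc] at hval
        refine hnc ⟨flipC j' u, hflipG, u, hu, ?_⟩
        simp [flipC]
  have hnegH : negV (Fin.insertNth f false u) ∈ H := hHneg _ ha
  rw [negV_insert] at hnegH
  have hnegu : negV u ∈ G := (mem_G_iff hG _).mpr (by simpa using hnegH)
  by_cases hall : ∀ j, NonConst G j
  · apply h2
    have : negV u = negOn G u := by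
      funext j
      simp [negV, negOn, hall j]
    rwa [this] at hnegu
  · push_neg at hall
    obtain ⟨j, hj⟩ := hall
    refine hj ⟨u, hu, negV u, hnegu, ?_⟩
    simp [negV]

end AuxLemmas

/-- antipodes commute with contraction in affine partial cubes. -/
theorem stmt16 {n : ℕ} (G : Set (Fin (n + 1) → Bool))
    (hpc : IsPartialCube G) (haff : IsAffine G) (e : Fin (n + 1))
    (he : NonConst G e) :
    antipodes (delCoord e '' G) = delCoord e '' antipodes G := by
  ext u'
  constructor
  · intro h
    rw [antipodes_char] at h
    obtain ⟨⟨u, huG, rfl⟩, hneg⟩ := h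
    rw [← negOn_del] at hneg
    obtain ⟨w, hwG, hwdel⟩ := hneg
    have hcoords : ∀ j, w (e.succAbove j) = negOn G u (e.succAbove j) :=
      fun j => congrFun hwdel j
    have hnegue : negOn G u e = !(u e) := by simp [negOn, he]
    by_cases hcase : w e = negOn G u e
    · have hweq : w = negOn G u := by
        funext i
        by_cases hif : i = e
        · subst hif; exact hcase
        · obtain ⟨j, rfl⟩ := Fin.exists_succAbove_eq hif
          exact hcoords j
      refine ⟨u, ?_, rfl⟩
      rw [antipodes_char]
      exact ⟨huG, hweq ▸ hwG⟩
    · have hwe : w e = u e := by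
        rw [hnegue] at hcase
        cases h1 : w e <;> cases h2 : u e <;> simp_all
      have hwflip : w = flipC e (negOn G u) := by
        funext i
        by_cases hif : i = e
        · subst hif
          simp [flipC, hnegue, hwe]
        · obtain ⟨j, rfl⟩ := Fin.exists_succAbove_eq hif
          rw [hcoords j]
          simp [flipC, Function.update_of_ne hif]
      by_cases hb1 : flipC e u ∈ G
      · refine ⟨flipC e u, ?_, ?_⟩
        · rw [antipodes_char]
          refine ⟨hb1, ?_⟩
          have hkey : negOn G (flipC e u) = w := by
            funext i
            by_cases hif : i = e
            · subst hif
              simp [negOn, he, flipC, hwe]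
            · have h1 : flipC e u i = u i := by
                simp [flipC, Function.update_of_ne hif]
              obtain ⟨j, rfl⟩ := Fin.exists_succAbove_eq hif
              have h2 : negOn G (flipC e u) (e.succAbove j) = negOn G u (e.succAbove j) := by
                simp only [negOn, h1]
              rw [h2, ← hcoords j]
          rw [hkey]
          exact hwG
        · funext j
          simp [delCoord, flipC, Function.update_of_ne (Fin.succAbove_ne e j)]
      · by_cases hb2 : negOn G u ∈ G
        · refine ⟨u, ?_, rfl⟩
          rw [antipodes_char]
          exact ⟨huG, hb2⟩
        · exact (no_bad G haff e he u huG (hwflip ▸ hwG) hb1 hb2).elim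
  · rintro ⟨u, hu, rfl⟩
    rw [antipodes_char] at hu
    obtain ⟨huG, hnegG⟩ := hu
    rw [antipodes_char]
    refine ⟨⟨u, huG, rfl⟩, ?_⟩
    rw [← negOn_del]
    exact ⟨negOn G u, hnegG, rfl⟩

end

end PartialCubesPaper
end
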